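/- Let M be a real number with M ≥ 0. Then every complex number ξ satisfying the amplification polynomial equation (1 + M)·ξ² − 2·ξ + 1 = 0 has modulus |ξ| = 1/√(1 + M); in particular |ξ| ≤ 1. -/

import Mathlib

open Complex

/-- Every root `ξ` of the amplification polynomial `(1 + M)ξ² − 2ξ + 1` of the
IDEC scheme, with `M ≥ 0`, has modulus `1/√(1 + M)`; in particular `|ξ| ≤ 1`. -/
theorem idec_growth_factor_modulus (M : ℝ) (hM : M ≥ 0) (ξ : ℂ)
    (hξ : (1 + (M : ℂ)) * ξ ^ 2 - 2 * ξ + 1 = 0) :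
    ‖ξ‖ = 1 / Real.sqrt (1 + M) ∧ ‖ξ‖ ≤ 1 := by
  set a := ξ.re with ha
  set b := ξ.im with hb
  rw [Complex.ext_iff] at hξ
  obtain ⟨h1, h2⟩ := hξ
  simp [pow_two, Complex.add_re, Complex.add_im, Complex.mul_re, Complex.mul_im,
    Complex.sub_re, Complex.sub_im] at h1 h2
  have hre : (1 + M) * (a * a - b * b) - 2 * a + 1 = 0 := by
    linarith [h1]
  have him : b * ((1 + M) * a - 1) = 0 := by
    nlinarith [h2]
  have hpos : (0:ℝ) < 1 + M := by linarith
  have key : Complex.normSq ξ * (1 + M) = 1 := by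
    rw [Complex.normSq_apply, ← ha, ← hb]
    rcases mul_eq_zero.mp him with hb0 | hA
    · rw [hb0] at hre
      have hM0 : M = 0 := by
        nlinarith [sq_nonneg ((1 + M) * a - 1), hre, mul_pos hpos hpos]
      rw [hM0] at hre
      have ha1 : a = 1 := by nlinarith [sq_nonneg (a - 1), hre]
      rw [hb0, ha1, hM0]; ring
    · have hA' : (1 + M) * a = 1 := by linarith
      linear_combination (-1 : ℝ) * hre + 2 * a * hA'
  have hnorm : Complex.normSq ξ = 1 / (1 + M) := by
    field_simp at key ⊢; linarith
  have habs : ‖ξ‖ = 1 / Real.sqrt (1 + M) := by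
    rw [Complex.norm_def, hnorm, one_div, Real.sqrt_inv, one_div]
  refine ⟨habs, ?_⟩
  rw [habs]
  have h1le : (1:ℝ) ≤ Real.sqrt (1 + M) := by
    nlinarith [Real.sq_sqrt hpos.le, Real.sqrt_nonneg (1 + M),
      sq_nonneg (Real.sqrt (1 + M) - 1)]
  rw [div_le_one (by linarith)]
  exact h1le
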